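/- Let (N, ν) be a measure space, let p ∈ (1, ∞) with conjugate exponent p' := p/(p−1), let T > 1 and l ≥ 0 be real numbers, and let U : [1, T] × N → ℝ be a measurable function such that for ν-almost every x ∈ N the map t ↦ U(t, x) is continuously differentiable on [1, T] with U(T, x) = 0, and such that (t,x) ↦ ∂U/∂t(t,x) is measurable. Then ( ∫_N |U(1, x)|^p dν(x) )^{1/p} ≤ ( ∫₁^T t^{−l p'/p} dt )^{1/p'} · ( ∫₁^T ∫_N |∂U/∂t(t, x)|^p · t^l dν(x) dt )^{1/p}. -/

import Mathlib

open MeasureTheory Set Filter ENNReal Topology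

lemma swap_le_aux {N : Type*} [MeasurableSpace N] (ν : Measure N) {T : ℝ} (hT : 1 < T)
    (f : ℝ → N → ℝ) (hf : Measurable (Function.uncurry f))
    (hfc : ∀ᵐ x ∂ν, ContinuousOn (fun t => f t x) (Set.Icc 1 T)) :
    ∫⁻ x, (∫⁻ t in Set.Icc (1:ℝ) T, ENNReal.ofReal (f t x)) ∂ν
      ≤ ∫⁻ t in Set.Icc (1:ℝ) T, ∫⁻ x, ENNReal.ofReal (f t x) ∂ν := by
  have hT1 : (0:ℝ) < T - 1 := by linarith
  set G : ℝ → ℝ≥0∞ := fun t => ∫⁻ x, ENNReal.ofReal (f t x) ∂ν with hG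
  set δf : ℕ → ℝ := fun n => (T - 1) / (n + 1) with hδf
  have hδpos : ∀ n : ℕ, 0 < δf n := fun n => div_pos hT1 (by positivity)
  set a : ℕ → ℕ → ℝ := fun n i => 1 + i * δf n with ha
  have ha1 : ∀ n i, 1 ≤ a n i := fun n i => le_add_of_nonneg_right (by positivity)
  have ha_succ : ∀ n i, a n (i + 1) = a n i + δf n := by
    intro n i; simp only [ha]; push_cast; ring
  have ha_mono : ∀ n i j, i ≤ j → a n i ≤ a n j := by
    intro n i j hij
    simp only [ha]
    have h1 : (i:ℝ) ≤ j := by exact_mod_cast hij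
    nlinarith [le_of_lt (hδpos n)]
  have ha_top : ∀ n : ℕ, a n (n + 1) = T := by
    intro n
    simp only [ha, hδf]
    push_cast
    field_simp
    ring
  set In : ℕ → ℕ → Set ℝ := fun n i => Ico (a n i) (a n (i+1)) with hIn
  have hIn_sub : ∀ n i, i ≤ n → In n i ⊆ Icc 1 T := by
    intro n i hi t ht
    exact ⟨le_trans (ha1 n i) ht.1,
      le_trans (le_of_lt ht.2) (by rw [← ha_top n]; exact ha_mono n (i+1) (n+1) (by omega))⟩
  have hIn_vol : ∀ n i, volume (In n i) = ENNReal.ofReal (δf n) := by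
    intro n i
    simp only [hIn]
    rw [Real.volume_Ico, ha_succ]
    congr 1
    ring
  set m : ℕ → ℕ → N → ℝ≥0∞ := fun n i x =>
    ⨅ (r : ℚ) (_ : (r:ℝ) ∈ In n i), ENNReal.ofReal (f r x) with hm
  have hm_meas : ∀ n i, Measurable (m n i) := by
    intro n i
    refine Measurable.iInf fun r => Measurable.iInf fun _ => ?_
    exact (hf.comp measurable_prodMk_left).ennreal_ofReal
  set D : ℕ → N → ℝ≥0∞ := fun n x =>
    ∑ i ∈ Finset.range (n+1), ENNReal.ofReal (δf n) * m n i x with hD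
  have hD_meas : ∀ n, Measurable (D n) := by
    intro n
    exact Finset.measurable_sum _ fun i _ => (hm_meas n i).const_mul _
  -- m is below f at every point of the interval, for continuous sections
  have hm_le : ∀ n i, i ≤ n → ∀ t ∈ In n i, ∀ x : N,
      ContinuousOn (fun t => f t x) (Set.Icc 1 T) → m n i x ≤ ENNReal.ofReal (f t x) := by
    intro n i hi t ht x hx
    have hex : ∀ k : ℕ, ∃ r : ℚ, t < (r:ℝ) ∧ (r:ℝ) < min (a n (i+1)) (t + 1/(k+1)) := by
      intro k
      exact_mod_cast exists_rat_btwn (lt_min ht.2 (lt_add_of_pos_right t (by positivity)))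
    choose r hr1 hr2 using hex
    have hrmem : ∀ k, (r k : ℝ) ∈ In n i := fun k =>
      ⟨le_of_lt (lt_of_le_of_lt ht.1 (hr1 k)), lt_of_lt_of_le (hr2 k) (min_le_left _ _)⟩
    have hub : Tendsto (fun k : ℕ => t + 1/((k:ℝ)+1)) atTop (𝓝 t) := by
      have h0 : Tendsto (fun k : ℕ => 1/((k:ℝ)+1)) atTop (𝓝 0) :=
        tendsto_one_div_add_atTop_nhds_zero_nat
      simpa using tendsto_const_nhds.add h0
    have hrt : Tendsto (fun k => (r k : ℝ)) atTop (𝓝 t) :=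
      tendsto_of_tendsto_of_tendsto_of_le_of_le tendsto_const_nhds hub
        (fun k => le_of_lt (hr1 k)) (fun k => le_of_lt (lt_of_lt_of_le (hr2 k) (min_le_right _ _)))
    have htmem : t ∈ Icc 1 T := hIn_sub n i hi ht
    have hcw : Tendsto (fun k => f (r k) x) atTop (𝓝 (f t x)) := by
      refine (hx t htmem).tendsto.comp ?_
      rw [tendsto_nhdsWithin_iff]
      exact ⟨hrt, Eventually.of_forall fun k => hIn_sub n i hi (hrmem k)⟩
    refine ge_of_tendsto ((ENNReal.continuous_ofReal.tendsto _).comp hcw)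
      (Eventually.of_forall fun k => ?_)
    exact iInf₂_le (r k) (hrmem k)
  -- Key 1: the integral of D n is at most the RHS
  have key1 : ∀ n, ∫⁻ x, D n x ∂ν ≤ ∫⁻ t in Icc (1:ℝ) T, G t := by
    intro n
    have hmG : ∀ i, i ≤ n → ∀ t ∈ In n i, ∫⁻ x, m n i x ∂ν ≤ G t := by
      intro i hi t ht
      refine lintegral_mono_ae ?_
      filter_upwards [hfc] with x hx
      exact hm_le n i hi t ht x hx
    have hDeq : ∫⁻ x, D n x ∂ν
        = ∑ i ∈ Finset.range (n+1), ENNReal.ofReal (δf n) * ∫⁻ x, m n i x ∂ν := by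
      simp only [hD]
      rw [lintegral_finset_sum _ (fun i _ => (hm_meas n i).const_mul _)]
      refine Finset.sum_congr rfl fun i _ => ?_
      rw [lintegral_const_mul _ (hm_meas n i)]
    set ψ : ℝ → ℝ≥0∞ := fun t =>
      ∑ i ∈ Finset.range (n+1), (In n i).indicator (fun _ => ∫⁻ x, m n i x ∂ν) t with hψ
    have hdisj : ∀ t : ℝ, ∀ i j, i ≠ j → t ∈ In n i → t ∉ In n j := by
      intro t i j hij hti htj
      rcases lt_or_gt_of_ne hij with h | h
      · exact absurd (lt_of_lt_of_le hti.2 (le_trans (ha_mono n (i+1) j h) htj.1)) (lt_irrefl t)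
      · exact absurd (lt_of_lt_of_le htj.2 (le_trans (ha_mono n (j+1) i h) hti.1)) (lt_irrefl t)
    have hψ_le : ∀ t, ψ t ≤ G t := by
      intro t
      by_cases hex : ∃ i, i ∈ Finset.range (n+1) ∧ t ∈ In n i
      · obtain ⟨i, hi, hti⟩ := hex
        simp only [hψ]
        rw [Finset.sum_eq_single i]
        · rw [Set.indicator_of_mem hti]
          exact hmG i (by simp only [Finset.mem_range] at hi; omega) t hti
        · intro j _ hji
          exact Set.indicator_of_notMem (hdisj t i j (Ne.symm hji) hti) _
        · intro h; exact absurd hi h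
      · push_neg at hex
        simp only [hψ]
        rw [Finset.sum_eq_zero]
        · exact zero_le
        · intro i hi
          exact Set.indicator_of_notMem (hex i hi) _
    have hψ_int : ∑ i ∈ Finset.range (n+1), ENNReal.ofReal (δf n) * ∫⁻ x, m n i x ∂ν
        = ∫⁻ t in Icc (1:ℝ) T, ψ t := by
      simp only [hψ]
      rw [lintegral_finset_sum _
        (fun i _ => (measurable_const.indicator measurableSet_Ico))]
      refine Finset.sum_congr rfl fun i hi => ?_
      rw [lintegral_indicator measurableSet_Ico, Measure.restrict_restrict measurableSet_Ico,
        setLIntegral_const]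
      have hsub : In n i ∩ Icc 1 T = In n i :=
        Set.inter_eq_self_of_subset_left (hIn_sub n i (by
          simp only [Finset.mem_range] at hi; omega))
      rw [hsub, hIn_vol, mul_comm]
    rw [hDeq, hψ_int]
    exact lintegral_mono hψ_le
  -- Key 2: a.e. pointwise, C x ≤ liminf D n x
  have key2 : ∀ᵐ x ∂ν, (∫⁻ t in Icc (1:ℝ) T, ENNReal.ofReal (f t x))
      ≤ atTop.liminf (fun n => D n x) := by
    filter_upwards [hfc] with x hx
    set C : ℝ≥0∞ := ∫⁻ t in Icc (1:ℝ) T, ENNReal.ofReal (f t x) with hC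
    refine ENNReal.le_of_forall_pos_le_add fun ε hε _ => ?_
    set ε' : ℝ := (ε : ℝ) / (T - 1) with hε'
    have hε'pos : 0 < ε' := div_pos (by exact_mod_cast hε) hT1
    have hu := isCompact_Icc.uniformContinuousOn_of_continuous hx
    rw [Metric.uniformContinuousOn_iff] at hu
    obtain ⟨d, hd, hud⟩ := hu ε' hε'pos
    have hev : ∀ᶠ n in atTop, C - ENNReal.ofReal (ε' * (T-1)) ≤ D n x := by
      filter_upwards [eventually_ge_atTop (Nat.ceil ((T-1)/d))] with n hn
      have hδd : δf n < d := by
        rw [hδf]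
        rw [div_lt_iff₀ (by positivity)]
        have h1 : (T-1)/d ≤ (n:ℝ) := le_trans (Nat.le_ceil _) (by exact_mod_cast hn)
        rw [div_le_iff₀ hd] at h1
        nlinarith
      rw [tsub_le_iff_right]
      have hpt : ∀ i, i ≤ n → ∀ t ∈ In n i,
          ENNReal.ofReal (f t x) ≤ m n i x + ENNReal.ofReal ε' := by
        intro i hi t ht
        rw [← tsub_le_iff_right]
        refine le_iInf₂ fun r hr => ?_
        have habs : |t - (r:ℝ)| < d := by
          rw [abs_sub_lt_iff]
          have h1 := ht.1; have h2 := ht.2; have h3 := hr.1; have h4 := hr.2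
          rw [ha_succ] at h2 h4
          constructor <;> nlinarith
        have hdist := hud t (hIn_sub n i hi ht) (r:ℝ) (hIn_sub n i hi hr)
          (by rw [Real.dist_eq]; exact habs)
        have hfr : f t x - ε' ≤ f (r:ℝ) x := by
          rw [Real.dist_eq, abs_sub_lt_iff] at hdist
          linarith [hdist.1]
        calc ENNReal.ofReal (f t x) - ENNReal.ofReal ε'
            = ENNReal.ofReal (f t x - ε') := (ENNReal.ofReal_sub _ (le_of_lt hε'pos)).symm
          _ ≤ ENNReal.ofReal (f (r:ℝ) x) := ENNReal.ofReal_le_ofReal hfr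
      have hCover : ∀ k : ℕ,
          ∫⁻ t in Ico (1:ℝ) (a n k), ENNReal.ofReal (f t x)
            ≤ ∑ i ∈ Finset.range k, ∫⁻ t in In n i, ENNReal.ofReal (f t x) := by
        intro k
        induction k with
        | zero =>
          have h0 : a n 0 = 1 := by simp [ha]
          rw [h0]
          simp
        | succ k ih =>
          have hsplit : Ico (1:ℝ) (a n (k+1)) = Ico 1 (a n k) ∪ In n k := by
            simp only [hIn]
            rw [Set.Ico_union_Ico_eq_Ico (ha1 n k) (ha_mono n k (k+1) (by omega))]
          rw [hsplit, Finset.sum_range_succ]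
          exact le_trans (lintegral_union_le _ _ _) (add_le_add ih le_rfl)
      have hCico : C = ∫⁻ t in Ico (1:ℝ) T, ENNReal.ofReal (f t x) := by
        rw [hC, Measure.restrict_congr_set Ico_ae_eq_Icc]
      have hCle : C ≤ ∑ i ∈ Finset.range (n+1), ∫⁻ t in In n i, ENNReal.ofReal (f t x) := by
        rw [hCico, ← ha_top n]
        exact hCover (n+1)
      have hterm : ∀ i, i ≤ n → ∫⁻ t in In n i, ENNReal.ofReal (f t x)
          ≤ ENNReal.ofReal (δf n) * (m n i x + ENNReal.ofReal ε') := by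
        intro i hi
        calc ∫⁻ t in In n i, ENNReal.ofReal (f t x)
            ≤ ∫⁻ _ in In n i, (m n i x + ENNReal.ofReal ε') :=
              setLIntegral_mono measurable_const (fun t ht => hpt i hi t ht)
          _ = (m n i x + ENNReal.ofReal ε') * volume (In n i) := setLIntegral_const _ _
          _ = ENNReal.ofReal (δf n) * (m n i x + ENNReal.ofReal ε') := by
              rw [hIn_vol, mul_comm]
      calc C ≤ ∑ i ∈ Finset.range (n+1), ∫⁻ t in In n i, ENNReal.ofReal (f t x) := hCle
        _ ≤ ∑ i ∈ Finset.range (n+1),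
              ENNReal.ofReal (δf n) * (m n i x + ENNReal.ofReal ε') :=
            Finset.sum_le_sum fun i hi => hterm i (by
              simp only [Finset.mem_range] at hi; omega)
        _ = D n x + (n+1) * (ENNReal.ofReal (δf n) * ENNReal.ofReal ε') := by
            simp only [hD, mul_add, Finset.sum_add_distrib, Finset.sum_const,
              Finset.card_range, nsmul_eq_mul]
            push_cast
            ring
        _ = D n x + ENNReal.ofReal (ε' * (T-1)) := by
            congr 1
            rw [← ENNReal.ofReal_mul (le_of_lt (hδpos n))]
            have hcast : ((n:ℝ≥0∞) + 1) = ENNReal.ofReal ((n:ℝ) + 1) := by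
              rw [ENNReal.ofReal_add (by positivity) zero_le_one, ENNReal.ofReal_natCast,
                ENNReal.ofReal_one]
            rw [hcast, ← ENNReal.ofReal_mul (by positivity)]
            congr 1
            simp only [hδf]
            field_simp
    have hle := Filter.le_liminf_of_le (by isBoundedDefault) hev
    rw [tsub_le_iff_right] at hle
    refine le_trans hle ?_
    have hεeq : ENNReal.ofReal (ε' * (T-1)) = (ε : ℝ≥0∞) := by
      rw [hε', div_mul_cancel₀ _ (ne_of_gt hT1)]
      exact ENNReal.ofReal_coe_nnreal
    rw [hεeq]
  calc ∫⁻ x, (∫⁻ t in Icc (1:ℝ) T, ENNReal.ofReal (f t x)) ∂ν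
      ≤ ∫⁻ x, atTop.liminf (fun n => D n x) ∂ν := lintegral_mono_ae key2
    _ ≤ atTop.liminf (fun n => ∫⁻ x, D n x ∂ν) := lintegral_liminf_le hD_meas
    _ ≤ ∫⁻ t in Icc (1:ℝ) T, G t :=
        Filter.liminf_le_of_frequently_le (Frequently.of_forall key1) (by isBoundedDefault)


open MeasureTheory

/-- Minkowski + Hölder estimate (eq_u_eta_prel): if for `ν`-a.e. `x` the function
`t ↦ U t x` is `C¹` on `[1,T]` with derivative `U' t x` and `U T x = 0`, then
`‖U 1 ·‖_{L^p(ν)} ≤ (∫₁^T t^{−l p'/p} dt)^{1/p'} (∫₁^T ∫ |U'|^p t^l dν dt)^{1/p}`,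
where `p' = p/(p−1)` is the conjugate exponent. -/
theorem stmt7 {N : Type*} [MeasurableSpace N] (ν : Measure N)
    (p : ℝ) (hp : 1 < p) (T l : ℝ) (hT : 1 < T) (hl : 0 ≤ l)
    (U U' : ℝ → N → ℝ)
    (hUmeas : Measurable (Function.uncurry U))
    (hU'meas : Measurable (Function.uncurry U'))
    (hder : ∀ᵐ x ∂ν,
      (∀ t ∈ Set.Icc (1 : ℝ) T,
        HasDerivWithinAt (fun s => U s x) (U' t x) (Set.Icc (1 : ℝ) T) t) ∧
      ContinuousOn (fun t => U' t x) (Set.Icc (1 : ℝ) T) ∧ U T x = 0) :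
    (∫⁻ x, ENNReal.ofReal (|U 1 x| ^ p) ∂ν) ^ (1 / p) ≤
      (∫⁻ t in Set.Icc (1 : ℝ) T,
          ENNReal.ofReal (t ^ (-(l * (p / (p - 1))) / p))) ^ (1 / (p / (p - 1))) *
        (∫⁻ t in Set.Icc (1 : ℝ) T,
          ∫⁻ x, ENNReal.ofReal (|U' t x| ^ p * t ^ l) ∂ν) ^ (1 / p) := by
  have hp0 : 0 < p := lt_trans one_pos hp
  have hp1 : 0 < p - 1 := by linarith
  set q : ℝ := p / (p - 1) with hq
  have hqp : q.HolderConjugate p := (Real.HolderConjugate.conjExponent hp).symm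
  have hq0 : 0 < q := div_pos hp0 hp1
  set A : ℝ≥0∞ := ∫⁻ t in Set.Icc (1:ℝ) T, ENNReal.ofReal (t ^ (-(l * q) / p)) with hA
  set F : ℝ → N → ℝ≥0∞ := fun t x => ENNReal.ofReal (|U' t x| ^ p * t ^ l) with hF
  set C : N → ℝ≥0∞ := fun x => ∫⁻ t in Set.Icc (1:ℝ) T, F t x with hC
  set B : ℝ≥0∞ := ∫⁻ t in Set.Icc (1:ℝ) T, ∫⁻ x, F t x ∂ν with hB
  -- pointwise estimate
  have hpt : ∀ᵐ x ∂ν, ENNReal.ofReal (|U 1 x| ^ p) ≤ A ^ ((1/q) * p) * C x := by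
    filter_upwards [hder] with x hx
    obtain ⟨hd, hc, hUT⟩ := hx
    have hsec : Measurable fun t => U' t x :=
      hU'meas.comp (measurable_id.prodMk measurable_const)
    -- FTC
    have hcont : ContinuousOn (fun s => U s x) (Set.Icc 1 T) :=
      fun t ht => (hd t ht).continuousWithinAt
    have hderIoo : ∀ t ∈ Set.Ioo (1:ℝ) T,
        HasDerivWithinAt (fun s => U s x) (U' t x) (Set.Ioi t) t := fun t ht =>
      (((hd t (Set.Ioo_subset_Icc_self ht)).hasDerivAt
        (Icc_mem_nhds ht.1 ht.2)).hasDerivWithinAt)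
    have hInt : IntervalIntegrable (fun t => U' t x) volume 1 T := by
      apply ContinuousOn.intervalIntegrable
      rwa [Set.uIcc_of_le hT.le]
    have heq : ∫ t in (1:ℝ)..T, U' t x = U T x - U 1 x :=
      intervalIntegral.integral_eq_sub_of_hasDeriv_right_of_le hT.le hcont hderIoo hInt
    have hU1 : |U 1 x| = |∫ t in (1:ℝ)..T, U' t x| := by
      rw [heq, hUT, zero_sub, abs_neg]
    have hIntAbs : IntegrableOn (fun t => |U' t x|) (Set.Icc 1 T) volume :=
      hc.abs.integrableOn_Icc
    have hftc : |U 1 x| ≤ ∫ t in Set.Icc (1:ℝ) T, |U' t x| := by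
      rw [hU1, MeasureTheory.integral_Icc_eq_integral_Ioc,
        ← intervalIntegral.integral_of_le hT.le]
      exact intervalIntegral.abs_integral_le_integral_abs hT.le
    have hofReal : ENNReal.ofReal (|U 1 x|)
        ≤ ∫⁻ t in Set.Icc (1:ℝ) T, ENNReal.ofReal |U' t x| := by
      rw [← ofReal_integral_eq_lintegral_ofReal hIntAbs
        (Filter.Eventually.of_forall fun t => abs_nonneg _)]
      exact ENNReal.ofReal_le_ofReal hftc
    -- Hölder in t
    set φ : ℝ → ℝ≥0∞ := fun t => ENNReal.ofReal (t ^ (-(l/p))) with hφ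
    set ψ : ℝ → ℝ≥0∞ := fun t => ENNReal.ofReal (t ^ (l/p) * |U' t x|) with hψ
    have hφm : Measurable φ := by
      apply Measurable.ennreal_ofReal
      fun_prop
    have hψm : Measurable ψ := by
      apply Measurable.ennreal_ofReal
      exact Measurable.mul (by fun_prop) hsec.abs
    have hprod : ∫⁻ t in Set.Icc (1:ℝ) T, ENNReal.ofReal |U' t x|
        = ∫⁻ t in Set.Icc (1:ℝ) T, (φ * ψ) t := by
      refine setLIntegral_congr_fun measurableSet_Icc
        (fun t ht => ?_)
      have ht0 : 0 < t := lt_of_lt_of_le one_pos ht.1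
      simp only [hφ, hψ, Pi.mul_apply]
      rw [← ENNReal.ofReal_mul (Real.rpow_nonneg ht0.le _), ← mul_assoc,
        ← Real.rpow_add ht0, neg_add_cancel, Real.rpow_zero, one_mul]
    have hHolder := ENNReal.lintegral_mul_le_Lp_mul_Lq (volume.restrict (Set.Icc (1:ℝ) T))
      hqp hφm.aemeasurable hψm.aemeasurable
    have hφq : ∫⁻ t in Set.Icc (1:ℝ) T, φ t ^ q = A := by
      rw [hA]
      refine setLIntegral_congr_fun measurableSet_Icc
        (fun t ht => ?_)
      have ht0 : (0:ℝ) ≤ t := le_trans zero_le_one ht.1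
      simp only [hφ]
      rw [ENNReal.ofReal_rpow_of_nonneg (Real.rpow_nonneg ht0 _) hq0.le,
        ← Real.rpow_mul ht0]
      congr 1
      field_simp
    have hψp : ∫⁻ t in Set.Icc (1:ℝ) T, ψ t ^ p = C x := by
      rw [hC]
      refine setLIntegral_congr_fun measurableSet_Icc
        (fun t ht => ?_)
      have ht0 : (0:ℝ) ≤ t := le_trans zero_le_one ht.1
      simp only [hψ, hF]
      rw [ENNReal.ofReal_rpow_of_nonneg (mul_nonneg (Real.rpow_nonneg ht0 _) (abs_nonneg _))
        hp0.le, Real.mul_rpow (Real.rpow_nonneg ht0 _) (abs_nonneg _),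
        ← Real.rpow_mul ht0, div_mul_cancel₀ _ (ne_of_gt hp0), mul_comm]
    have hkey : ENNReal.ofReal (|U 1 x|) ≤ A ^ (1/q) * (C x) ^ (1/p) := by
      refine le_trans hofReal ?_
      rw [hprod]
      refine le_trans hHolder ?_
      rw [hφq, hψp]
    have hgoal : ENNReal.ofReal (|U 1 x| ^ p) ≤ (A ^ (1/q) * (C x) ^ (1/p)) ^ p := by
      rw [← ENNReal.ofReal_rpow_of_nonneg (abs_nonneg _) hp0.le]
      exact ENNReal.rpow_le_rpow hkey hp0.le
    refine le_trans hgoal ?_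
    rw [ENNReal.mul_rpow_of_nonneg _ _ hp0.le, ← ENNReal.rpow_mul, ← ENNReal.rpow_mul]
    have h1p : 1/p * p = 1 := by field_simp
    rw [h1p, ENNReal.rpow_one]
  -- measurability of C
  have hFm : Measurable (Function.uncurry F) := by
    have hrw : Function.uncurry F
        = fun z : ℝ × N => ENNReal.ofReal (|Function.uncurry U' z| ^ p * z.1 ^ l) := rfl
    rw [hrw]
    apply Measurable.ennreal_ofReal
    fun_prop
  have hCmeas : Measurable C := hFm.lintegral_prod_left
  -- main chain
  have step2 : ∫⁻ x, ENNReal.ofReal (|U 1 x| ^ p) ∂ν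
      ≤ A ^ ((1/q) * p) * ∫⁻ x, C x ∂ν :=
    (lintegral_mono_ae hpt).trans_eq (lintegral_const_mul'' _ hCmeas.aemeasurable)
  have hswap : ∫⁻ x, C x ∂ν ≤ B := by
    refine swap_le_aux ν hT (fun t x => |U' t x| ^ p * t ^ l) (by fun_prop) ?_
    filter_upwards [hder] with x hx
    have h1 : ContinuousOn (fun t => |U' t x| ^ p) (Set.Icc 1 T) :=
      hx.2.1.abs.rpow_const (fun t _ => Or.inr hp0.le)
    have h2 : ContinuousOn (fun t : ℝ => t ^ l) (Set.Icc 1 T) :=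
      continuousOn_id.rpow_const (fun t _ => Or.inr hl)
    exact h1.mul h2
  have hfinal : ∫⁻ x, ENNReal.ofReal (|U 1 x| ^ p) ∂ν ≤ A ^ ((1/q) * p) * B :=
    le_trans step2 (by gcongr)
  calc (∫⁻ x, ENNReal.ofReal (|U 1 x| ^ p) ∂ν) ^ (1/p)
      ≤ (A ^ ((1/q) * p) * B) ^ (1/p) := ENNReal.rpow_le_rpow hfinal (by positivity)
    _ = A ^ ((1/q) * p * (1/p)) * B ^ (1/p) := by
        rw [ENNReal.mul_rpow_of_nonneg _ _ (by positivity : (0:ℝ) ≤ 1/p),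
          ← ENNReal.rpow_mul]
    _ = A ^ (1/q) * B ^ (1/p) := by
        congr 1
        rw [mul_assoc, mul_one_div, div_self (ne_of_gt hp0), mul_one]
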